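/- Let H_2(y) = (y/2 + 1) · ln(1 + (2/y)·(1 + √((2+y)/(y−2)))). Then H_2 is strictly decreasing on [5, ∞), and H_2(3) > H_2(4) > H_2(5); consequently, for every integer d2 ≥ 5, H_2(d2) < H_2(d2 − 2). -/

import Mathlib

/-- `H₂(y) = (y/2 + 1) · ln(1 + (2/y)(1 + √((2+y)/(y−2))))`. -/
noncomputable def H2 (y : ℝ) : ℝ :=
  (y / 2 + 1) * Real.log (1 + (2 / y) * (1 + Real.sqrt ((2 + y) / (y - 2))))

/-- Alternative form of `H2` valid for `y > 2`. -/
noncomputable def F2 (y : ℝ) : ℝ :=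
  (y / 2 + 1) * (Real.log (1 + 2 / y) + Real.log (1 + 2 / Real.sqrt (y ^ 2 - 4)))

lemma sqrt_ratio (y : ℝ) (hy : 2 < y) :
    Real.sqrt ((2 + y) / (y - 2)) = (2 + y) / Real.sqrt (y ^ 2 - 4) := by
  have h1 : (0:ℝ) < y - 2 := by linarith
  have h2 : (0:ℝ) < 2 + y := by linarith
  have h3 : (0:ℝ) < y ^ 2 - 4 := by nlinarith
  have key : (2 + y) / (y - 2) = (2 + y) ^ 2 / (y ^ 2 - 4) := by
    rw [div_eq_div_iff h1.ne' h3.ne']; ring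
  rw [key, Real.sqrt_div (by positivity), Real.sqrt_sq h2.le]

lemma H2_eq_F2 (y : ℝ) (hy : 2 < y) : H2 y = F2 y := by
  have h3 : (0:ℝ) < y ^ 2 - 4 := by nlinarith
  have hu : (0:ℝ) < Real.sqrt (y ^ 2 - 4) := Real.sqrt_pos.mpr h3
  set u := Real.sqrt (y ^ 2 - 4) with hudef
  have hy0 : (0:ℝ) < y := by linarith
  have inner : 1 + (2 / y) * (1 + Real.sqrt ((2 + y) / (y - 2)))
      = (1 + 2 / y) * (1 + 2 / u) := by
    rw [sqrt_ratio y hy, ← hudef]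
    field_simp
    ring
  have hA : (0:ℝ) < 1 + 2 / y := by positivity
  have hB : (0:ℝ) < 1 + 2 / u := by positivity
  rw [H2, F2, inner, Real.log_mul hA.ne' hB.ne']

lemma F2_deriv_neg (x : ℝ) (hx : 5 < x) :
    ∃ D, HasDerivAt F2 D x ∧ D < 0 := by
  have hx0 : (0:ℝ) < x := by linarith
  have h3 : (0:ℝ) < x ^ 2 - 4 := by nlinarith
  set u := Real.sqrt (x ^ 2 - 4) with hudef
  have hu : (0:ℝ) < u := Real.sqrt_pos.mpr h3
  have hu2 : u ^ 2 = x ^ 2 - 4 := Real.sq_sqrt h3.le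
  have hux : u < x := by
    nlinarith [hu2, hu, hx0]
  have hA : (0:ℝ) < 1 + 2 / x := by positivity
  have hB : (0:ℝ) < 1 + 2 / u := by positivity
  -- derivative of sqrt (y^2 - 4)
  have hsq : HasDerivAt (fun y : ℝ => y ^ 2 - 4) (2 * x) x := by
    simpa using ((hasDerivAt_pow 2 x).sub_const 4)
  have hu' : HasDerivAt (fun y : ℝ => Real.sqrt (y ^ 2 - 4))
      (1 / (2 * u) * (2 * x)) x :=
    (Real.hasDerivAt_sqrt h3.ne').comp x hsq
  have hdiv2u : HasDerivAt (fun y : ℝ => 2 / Real.sqrt (y ^ 2 - 4))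
      ((0 * u - 2 * (1 / (2 * u) * (2 * x))) / u ^ 2) x :=
    (hasDerivAt_const x 2).div hu' hu.ne'
  have hlog2u : HasDerivAt (fun y : ℝ => Real.log (1 + 2 / Real.sqrt (y ^ 2 - 4)))
      ((0 + (0 * u - 2 * (1 / (2 * u) * (2 * x))) / u ^ 2) / (1 + 2 / u)) x :=
    HasDerivAt.log ((hasDerivAt_const x 1).add hdiv2u) (by positivity)
  have hdiv2x : HasDerivAt (fun y : ℝ => 2 / y)
      ((0 * x - 2 * 1) / x ^ 2) x :=
    (hasDerivAt_const x 2).div (hasDerivAt_id x) hx0.ne'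
  have hlog2x : HasDerivAt (fun y : ℝ => Real.log (1 + 2 / y))
      ((0 + (0 * x - 2 * 1) / x ^ 2) / (1 + 2 / x)) x :=
    HasDerivAt.log ((hasDerivAt_const x 1).add hdiv2x) (by positivity)
  have hlin : HasDerivAt (fun y : ℝ => y / 2 + 1) (1 / 2) x := by
    simpa using ((hasDerivAt_id x).div_const 2).add_const 1
  have hF : HasDerivAt F2
      (1 / 2 * (Real.log (1 + 2 / x) + Real.log (1 + 2 / u))
        + (x / 2 + 1) * (((0 + (0 * x - 2 * 1) / x ^ 2) / (1 + 2 / x))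
          + ((0 + (0 * u - 2 * (1 / (2 * u) * (2 * x))) / u ^ 2) / (1 + 2 / u)))) x := by
    have hF0 : HasDerivAt F2 _ x := hlin.mul (hlog2x.add hlog2u)
    simpa [← hudef] using hF0
  refine ⟨_, hF, ?_⟩
  set L1 := Real.log (1 + 2 / x) with hL1def
  set L2 := Real.log (1 + 2 / u) with hL2def
  have hL1 : L1 < 2 / x := by
    have h := Real.log_lt_sub_one_of_pos hA (by
      have : (0:ℝ) < 2 / x := by positivity
      linarith)
    rw [hL1def]; linarith
  have hL2 : L2 < 2 / u := by
    have h := Real.log_lt_sub_one_of_pos hB (by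
      have : (0:ℝ) < 2 / u := by positivity
      linarith)
    rw [hL2def]; linarith
  have hclean : 1 / 2 * (L1 + L2)
        + (x / 2 + 1) * (((0 + (0 * x - 2 * 1) / x ^ 2) / (1 + 2 / x))
          + ((0 + (0 * u - 2 * (1 / (2 * u) * (2 * x))) / u ^ 2) / (1 + 2 / u)))
      = (L1 + L2) / 2 - 1 / x - x * (x + 2) / (u ^ 2 * (u + 2)) := by
    field_simp
    ring
  rw [hclean]
  have key3 : 1 / u < x * (x + 2) / (u ^ 2 * (u + 2)) := by
    rw [div_lt_div_iff₀ hu (by positivity)]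
    nlinarith [hu, hux]
  have e1 : (2 / x) / 2 = 1 / x := by ring
  have e2 : (2 / u) / 2 = 1 / u := by ring
  have h1x : L1 / 2 < 1 / x := by rw [← e1]; linarith
  have h2u : L2 / 2 < 1 / u := by rw [← e2]; linarith
  linarith

lemma log_pow_ineq (a b : ℝ) (m n : ℕ) (hb : 0 < b) (h : b ^ n < a ^ m) :
    (n : ℝ) * Real.log b < (m : ℝ) * Real.log a := by
  have := Real.log_lt_log (pow_pos hb n) h
  rwa [Real.log_pow, Real.log_pow] at this

lemma sqrt5_bound : (2.236 : ℝ) ≤ Real.sqrt 5 :=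
  (Real.le_sqrt (by norm_num) (by norm_num)).mpr (by norm_num)

lemma sqrt3_lb : (1.732 : ℝ) ≤ Real.sqrt 3 :=
  (Real.le_sqrt (by norm_num) (by norm_num)).mpr (by norm_num)

lemma sqrt3_ub : Real.sqrt 3 ≤ (1.7321 : ℝ) :=
  Real.sqrt_le_iff.mpr ⟨by norm_num, by norm_num⟩

lemma sqrt73_ub : Real.sqrt (7/3) ≤ (1.528 : ℝ) :=
  Real.sqrt_le_iff.mpr ⟨by norm_num, by norm_num⟩

lemma H2_34 : H2 3 > H2 4 := by
  have h5 : (0:ℝ) ≤ Real.sqrt 5 := Real.sqrt_nonneg 5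
  have h3 : (0:ℝ) ≤ Real.sqrt 3 := Real.sqrt_nonneg 3
  set a := 1 + (2/3) * (1 + Real.sqrt 5) with hadef
  set b := 1 + (1/2) * (1 + Real.sqrt 3) with hbdef
  have ha : (3.157 : ℝ) ≤ a := by
    have := sqrt5_bound; rw [hadef]; linarith
  have hb0 : (0:ℝ) < b := by rw [hbdef]; positivity
  have hb : b ≤ (2.3661 : ℝ) := by
    have := sqrt3_ub; rw [hbdef]; linarith
  have hpow : b ^ 6 < a ^ 5 := by
    calc b ^ 6 ≤ (2.3661:ℝ) ^ 6 := by
          exact pow_le_pow_left₀ hb0.le hb 6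
      _ < (3.157:ℝ) ^ 5 := by norm_num
      _ ≤ a ^ 5 := pow_le_pow_left₀ (by norm_num) ha 5
  have key := log_pow_ineq a b 5 6 hb0 hpow
  have e3 : H2 3 = 5/2 * Real.log a := by
    rw [H2, hadef]; norm_num
  have e4 : H2 4 = 3 * Real.log b := by
    rw [H2, hbdef]; norm_num
  rw [e3, e4]; push_cast at key; linarith

lemma H2_45 : H2 4 > H2 5 := by
  have h3 : (0:ℝ) ≤ Real.sqrt 3 := Real.sqrt_nonneg 3
  have h73 : (0:ℝ) ≤ Real.sqrt (7/3) := Real.sqrt_nonneg _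
  set b := 1 + (1/2) * (1 + Real.sqrt 3) with hbdef
  set c := 1 + (2/5) * (1 + Real.sqrt (7/3)) with hcdef
  have hb : (2.366 : ℝ) ≤ b := by
    have := sqrt3_lb; rw [hbdef]; linarith
  have hc0 : (0:ℝ) < c := by rw [hcdef]; positivity
  have hc : c ≤ (2.0112 : ℝ) := by
    have := sqrt73_ub; rw [hcdef]; linarith
  have hpow : c ^ 7 < b ^ 6 := by
    calc c ^ 7 ≤ (2.0112:ℝ) ^ 7 := pow_le_pow_left₀ hc0.le hc 7
      _ < (2.366:ℝ) ^ 6 := by norm_num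
      _ ≤ b ^ 6 := pow_le_pow_left₀ (by norm_num) hb 6
  have key := log_pow_ineq b c 6 7 hc0 hpow
  have e4 : H2 4 = 3 * Real.log b := by
    rw [H2, hbdef]; norm_num
  have e5 : H2 5 = 7/2 * Real.log c := by
    rw [H2, hcdef]; norm_num
  rw [e4, e5]; push_cast at key; linarith

theorem H2_decreasing :
    StrictAntiOn H2 (Set.Ici (5 : ℝ)) ∧ H2 3 > H2 4 ∧ H2 4 > H2 5 ∧
      ∀ d2 : ℕ, 5 ≤ d2 → H2 (d2 : ℝ) < H2 ((d2 : ℝ) - 2) := by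
  have hcont : ContinuousOn F2 (Set.Ici (5 : ℝ)) := by
    have hsqrt : Continuous (fun y : ℝ => Real.sqrt (y ^ 2 - 4)) := by fun_prop
    apply ContinuousOn.mul (by fun_prop)
    apply ContinuousOn.add
    · apply ContinuousOn.log
      · exact continuousOn_const.add (continuousOn_const.div continuousOn_id
          (fun x hx => by have : (5:ℝ) ≤ x := hx; intro h; rw [h] at this; norm_num at this))
      · intro x hx
        have hx5 : (5:ℝ) ≤ x := hx
        have hx0 : (0:ℝ) < x := by linarith
        have : (0:ℝ) < 1 + 2 / x := by positivity
        exact this.ne'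
    · apply ContinuousOn.log
      · refine continuousOn_const.add (ContinuousOn.div continuousOn_const
          hsqrt.continuousOn (fun x hx => ?_))
        have hx5 : (5:ℝ) ≤ x := hx
        have : (0:ℝ) < Real.sqrt (x ^ 2 - 4) := Real.sqrt_pos.mpr (by nlinarith)
        exact this.ne'
      · intro x hx
        have hx5 : (5:ℝ) ≤ x := hx
        have hu : (0:ℝ) < Real.sqrt (x ^ 2 - 4) := Real.sqrt_pos.mpr (by nlinarith)
        have : (0:ℝ) < 1 + 2 / Real.sqrt (x ^ 2 - 4) := by positivity
        exact this.ne'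
  have hantiF : StrictAntiOn F2 (Set.Ici (5 : ℝ)) := by
    apply strictAntiOn_of_deriv_neg (convex_Ici 5) hcont
    intro x hx
    rw [interior_Ici] at hx
    obtain ⟨D, hD, hneg⟩ := F2_deriv_neg x hx
    rwa [hD.deriv]
  have hanti : StrictAntiOn H2 (Set.Ici (5 : ℝ)) := by
    intro p hp q hq hpq
    have hp5 : (5:ℝ) ≤ p := hp
    have hq5 : (5:ℝ) ≤ q := hq
    rw [H2_eq_F2 p (by linarith), H2_eq_F2 q (by linarith)]
    exact hantiF hp hq hpq
  refine ⟨hanti, H2_34, H2_45, ?_⟩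
  intro d2 hd2
  rcases lt_or_ge d2 7 with h | h
  · interval_cases d2
    · norm_num
      linarith [H2_34, H2_45]
    · have h65 : H2 6 < H2 5 := hanti (by norm_num) (by norm_num) (by norm_num)
      norm_num
      linarith [H2_45, h65]
  · have h7 : (7:ℝ) ≤ (d2 : ℝ) := by exact_mod_cast h
    exact hanti (Set.mem_Ici.mpr (by linarith)) (Set.mem_Ici.mpr (by linarith))
      (by linarith)
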